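/- arXiv:2603.02682 — 5 statements merged into one kernel-verified Lean document; each statement's English description precedes it below -/
import Mathlib

section
/- Shrinkage property of the ℓ_{1-2} thresholding operator: for every x ∈ R^n with S_λ(x) ≠ 0 and every index i, |(T_λ(x))_i - x_i| ≤ λ; i.e. ‖T_λ(x) - x‖_∞ ≤ λ. -/
open Finset

noncomputable def l1 {k : ℕ} (x : Fin k → ℝ) : ℝ := ∑ i, |x i|

noncomputable def l2 {k : ℕ} (x : Fin k → ℝ) : ℝ := Real.sqrt (∑ i, (x i)^2)

def restr {k : ℕ} (I : Finset (Fin k)) (x : Fin k → ℝ) : Fin k → ℝ :=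
  fun i => if i ∈ I then x i else 0


noncomputable def softT {k : ℕ} (lam : ℝ) (x : Fin k → ℝ) : Fin k → ℝ :=
  fun i => max (|x i| - lam) 0 * Real.sign (x i)

noncomputable def enlarge {k : ℕ} (lam : ℝ) (x : Fin k → ℝ) : Fin k → ℝ :=
  fun i => (1 + lam / l2 x) * x i

noncomputable def thrT {k : ℕ} (lam : ℝ) (x : Fin k → ℝ) : Fin k → ℝ :=
  enlarge lam (softT lam x)

theorem stmt3 {n : ℕ} (lam : ℝ) (hlam : 0 < lam) (x : Fin n → ℝ)
    (hS : softT lam x ≠ 0) : ∀ i, |thrT lam x i - x i| ≤ lam := by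
  intro i
  set S := softT lam x with hSdef
  have hsum : 0 < ∑ j, (S j)^2 := by
    obtain ⟨j, hj⟩ := Function.ne_iff.mp hS
    exact Finset.sum_pos' (fun k _ => sq_nonneg _) ⟨j, Finset.mem_univ j, pow_pos (abs_pos.mpr (by simpa using hj)) 2 |>.trans_le (le_of_eq (sq_abs _))⟩
  have hr : 0 < l2 S := Real.sqrt_pos.mpr hsum
  have habs : |S i| ≤ l2 S := by
    rw [← Real.sqrt_sq_eq_abs]
    exact Real.sqrt_le_sqrt (Finset.single_le_sum (f := fun j => (S j)^2) (fun j _ => sq_nonneg _) (Finset.mem_univ i))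
  have hT : thrT lam x i = (1 + lam / l2 S) * S i := rfl
  rcases le_or_gt (|x i|) lam with h | h
  · have hSi : S i = 0 := by
      simp [hSdef, softT, max_eq_right (by linarith : |x i| - lam ≤ 0)]
    rw [hT, hSi]
    simpa using h
  · have hdr : lam / l2 S * |S i| ≤ lam := by
      rw [div_mul_eq_mul_div, mul_comm]
      exact (div_le_iff₀ hr).mpr (by nlinarith)
    have hdrnn : 0 ≤ lam / l2 S * |S i| := by positivity
    rcases lt_trichotomy (x i) 0 with hx | hx | hx
    · have hax : |x i| = -x i := abs_of_neg hx
      have hSi : S i = -(|x i| - lam) := by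
        simp [hSdef, softT, max_eq_left (by linarith : (0:ℝ) ≤ |x i| - lam),
          Real.sign_of_neg hx]
      have haS : |S i| = |x i| - lam := by rw [hSi]; rw [abs_neg, abs_of_nonneg]; linarith
      rw [hT, hSi, abs_le]
      constructor <;> nlinarith [hdr, hdrnn, haS]
    · simp [hx] at h; linarith
    · have hax : |x i| = x i := abs_of_pos hx
      have hSi : S i = |x i| - lam := by
        simp [hSdef, softT, max_eq_left (by linarith : (0:ℝ) ≤ |x i| - lam),
          Real.sign_of_pos hx]
      have haS : |S i| = |x i| - lam := by rw [hSi]; rw [abs_of_nonneg]; linarith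
      rw [hT, hSi, abs_le]
      constructor <;> nlinarith [hdr, hdrnn, haS]
end

section
/- For every x ∈ R^n with S_λ(x) ≠ 0 and every index i with |x_i| > λ, one has |(S_λ(x))_i| ≤ |(T_λ(x))_i| ≤ |x_i|; i.e., the ℓ_{1-2} thresholding operator penalizes each large component less than the soft thresholding operator but never beyond the original value. -/
open Finset

theorem stmt4 {n : ℕ} (lam : ℝ) (hlam : 0 < lam) (x : Fin n → ℝ)
    (hS : softT lam x ≠ 0) (i : Fin n) (hi : lam < |x i|) :
    |softT lam x i| ≤ |thrT lam x i| ∧ |thrT lam x i| ≤ |x i| := by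
  set s := softT lam x with hs
  have hxne : x i ≠ 0 := by
    intro h; rw [h, abs_zero] at hi; linarith
  have hsign : |Real.sign (x i)| = 1 := by
    rcases Real.sign_apply_eq_of_ne_zero _ hxne with h | h <;> rw [h] <;> norm_num
  have hsi : |s i| = |x i| - lam := by
    have hmax : max (|x i| - lam) 0 = |x i| - lam := max_eq_left (by linarith)
    simp only [hs, softT, hmax, abs_mul, hsign, mul_one,
      abs_of_nonneg (by linarith : (0:ℝ) ≤ |x i| - lam)]
  have hL : |s i| ≤ l2 s := by
    rw [l2]
    have : |s i| = Real.sqrt ((s i)^2) := by rw [Real.sqrt_sq_eq_abs]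
    rw [this]
    apply Real.sqrt_le_sqrt
    exact Finset.single_le_sum (fun j _ => sq_nonneg (s j)) (Finset.mem_univ i)
  have hsipos : 0 < |s i| := by rw [hsi]; linarith
  have hLpos : 0 < l2 s := lt_of_lt_of_le hsipos hL
  have hthr : |thrT lam x i| = (1 + lam / l2 s) * |s i| := by
    rw [thrT, enlarge, abs_mul, abs_of_nonneg]
    positivity
  constructor
  · rw [hthr]
    nlinarith [div_nonneg hlam.le hLpos.le]
  · rw [hthr, hsi]
    have hdiv : (|x i| - lam) / l2 s ≤ 1 := by
      rw [div_le_one hLpos]; rw [hsi] at hL; linarith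
    calc (1 + lam / l2 s) * (|x i| - lam)
          = (|x i| - lam) + lam * ((|x i| - lam) / l2 s) := by ring
      _ ≤ (|x i| - lam) + lam * 1 := by
          gcongr
      _ = |x i| := by ring
end

section
/- Tail bound for block decomposition: Let x ∈ R^n, I ⊂ [n], t ≥ 1, p ≥ 1. Let J := I ∪ I(x;t), where I(x;t) is the set of indices of the t largest coordinates of |x| inside I^c. Then ‖x_{J^c}‖_p ≤ t^{1/p - 1} ‖x_{I^c}‖_1. -/
open Finset

theorem stmt6 {n : ℕ} (x : Fin n → ℝ) (I : Finset (Fin n)) (t : ℕ) (ht : 1 ≤ t)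
    (p : ℝ) (hp : 1 ≤ p) (T : Finset (Fin n))
    (hT1 : T ⊆ Iᶜ) (hT2 : T.card = min t Iᶜ.card)
    (hT3 : ∀ i ∈ T, ∀ j ∈ Iᶜ \ T, |x j| ≤ |x i|) :
    (∑ i ∈ (I ∪ T)ᶜ, |x i| ^ p) ^ (1/p) ≤ (t : ℝ) ^ (1/p - 1) * ∑ i ∈ Iᶜ, |x i| := by
  set S := ∑ i ∈ Iᶜ, |x i| with hSdef
  have hS0 : 0 ≤ S := Finset.sum_nonneg fun i _ => abs_nonneg _
  have hp0 : (0:ℝ) < p := lt_of_lt_of_le one_pos hp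
  have ht0 : (0:ℝ) < (t:ℝ) := by exact_mod_cast ht
  have hRHS0 : 0 ≤ (t : ℝ) ^ (1/p - 1) * S := by positivity
  by_cases hcase : Iᶜ.card < t
  · have hTI : T = Iᶜ := Finset.eq_of_subset_of_card_le hT1 (by
      rw [hT2]; omega)
    have hempty : (I ∪ T)ᶜ = (∅ : Finset (Fin n)) := by
      rw [hTI, Finset.union_compl, Finset.compl_univ]
    rw [hempty, Finset.sum_empty, Real.zero_rpow (by positivity)]
    exact hRHS0
  · push_neg at hcase
    have hTcard : T.card = t := by rw [hT2]; omega
    have hkey : ∀ i ∈ (I ∪ T)ᶜ, |x i| ≤ S / t := by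
      intro i hi
      simp only [Finset.mem_compl, Finset.mem_union, not_or] at hi
      have hi' : i ∈ Iᶜ \ T := by
        simp [Finset.mem_sdiff, Finset.mem_compl, hi.1, hi.2]
      rw [le_div_iff₀ ht0]
      calc |x i| * t = ∑ _j ∈ T, |x i| := by
            rw [Finset.sum_const, hTcard, nsmul_eq_mul, mul_comm]
        _ ≤ ∑ j ∈ T, |x j| := Finset.sum_le_sum fun j hj => hT3 j hj i hi'
        _ ≤ S := Finset.sum_le_sum_of_subset_of_nonneg hT1
            (fun _ _ _ => abs_nonneg _)
    have hsub : (I ∪ T)ᶜ ⊆ Iᶜ := Finset.compl_subset_compl.mpr Finset.subset_union_left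
    have h1 : ∑ i ∈ (I ∪ T)ᶜ, |x i| ^ p ≤ (S/t)^(p-1) * S := by
      calc ∑ i ∈ (I ∪ T)ᶜ, |x i| ^ p
          ≤ ∑ i ∈ (I ∪ T)ᶜ, (S/t)^(p-1) * |x i| := by
            apply Finset.sum_le_sum
            intro i hi
            rcases eq_or_lt_of_le (abs_nonneg (x i)) with h0 | h0
            · rw [← h0, Real.zero_rpow (ne_of_gt hp0), mul_zero]
            · have : |x i| ^ p = |x i| ^ (p-1) * |x i| := by
                rw [← Real.rpow_add_one (ne_of_gt h0) (p-1)]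
                norm_num
              rw [this]
              apply mul_le_mul_of_nonneg_right _ (abs_nonneg _)
              exact Real.rpow_le_rpow (le_of_lt h0) (hkey i hi) (by linarith)
        _ = (S/t)^(p-1) * ∑ i ∈ (I ∪ T)ᶜ, |x i| := by rw [Finset.mul_sum]
        _ ≤ (S/t)^(p-1) * S := by
            apply mul_le_mul_of_nonneg_left _ (by positivity)
            exact Finset.sum_le_sum_of_subset_of_nonneg hsub
              (fun _ _ _ => abs_nonneg _)
    have h2 : (∑ i ∈ (I ∪ T)ᶜ, |x i| ^ p) ^ (1/p) ≤ ((S/t)^(p-1) * S) ^ (1/p) :=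
      Real.rpow_le_rpow (Finset.sum_nonneg fun i _ =>
        Real.rpow_nonneg (abs_nonneg _) _) h1 (by positivity)
    refine h2.trans (le_of_eq ?_)
    rcases eq_or_lt_of_le hS0 with h0 | h0
    · rw [← h0, mul_zero, Real.zero_rpow (by positivity), mul_zero]
    · rw [Real.mul_rpow (by positivity) hS0,
        Real.div_rpow hS0 (le_of_lt ht0),
        Real.div_rpow (Real.rpow_nonneg hS0 _) (Real.rpow_nonneg (le_of_lt ht0) _),
        ← Real.rpow_mul hS0, ← Real.rpow_mul (le_of_lt ht0)]
      rw [div_mul_eq_mul_div, ← Real.rpow_add h0]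
      have e1 : (p-1) * (1/p) + 1/p = 1 := by field_simp; ring
      have e2 : (↑t:ℝ) ^ ((p-1) * (1/p)) = (↑t:ℝ) ^ (-(1/p - 1)) := by
        congr 1; field_simp; ring
      rw [e1, Real.rpow_one, e2, Real.rpow_neg (le_of_lt ht0),
        div_eq_mul_inv, inv_inv, mul_comm]
end

section
/- Truncation error bound: Let x ∈ R^n be s-sparse and z ∈ R^n arbitrary. Let H_s(z) denote the vector obtained from z by setting all but its s largest-magnitude entries to zero. Then ‖H_s(z) - x‖_2 ≤ ((√5 + 1)/2) ‖z - x‖_2. -/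
set_option maxHeartbeats 1000000

open Finset

lemma sum_restr_sq {k : ℕ} (A : Finset (Fin k)) (f : Fin k → ℝ) :
    ∑ i, (restr A f i)^2 = ∑ i ∈ A, (f i)^2 := by
  simp [restr, apply_ite (fun t : ℝ => t^2), Finset.sum_ite_mem]

lemma l2_eq_norm {k : ℕ} (f : Fin k → ℝ) :
    l2 f = ‖(WithLp.equiv 2 (Fin k → ℝ)).symm f‖ := by
  rw [EuclideanSpace.norm_eq]
  simp [l2, Real.norm_eq_abs, sq_abs]

lemma l2_restr {k : ℕ} (A : Finset (Fin k)) (f : Fin k → ℝ) :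
    l2 (restr A f) = Real.sqrt (∑ i ∈ A, (f i)^2) := by
  unfold l2; rw [sum_restr_sq]

lemma restr_mink {k : ℕ} (A : Finset (Fin k)) (x z : Fin k → ℝ) :
    Real.sqrt (∑ i ∈ A, (x i)^2) ≤
      Real.sqrt (∑ i ∈ A, (z i)^2) + Real.sqrt (∑ i ∈ A, (z i - x i)^2) := by
  have hxe : restr A x = restr A z - restr A (fun i => z i - x i) := by
    funext i
    simp only [restr, Pi.sub_apply]
    split <;> ring
  have tri : l2 (restr A x) ≤ l2 (restr A z) + l2 (restr A (fun i => z i - x i)) := by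
    rw [hxe, l2_eq_norm, l2_eq_norm, l2_eq_norm]
    rw [WithLp.equiv_symm_apply, WithLp.toLp_sub]
    exact norm_sub_le _ _
  simpa [l2_restr] using tri

theorem stmt7 {n s : ℕ} (x z : Fin n → ℝ)
    (Sx : Finset (Fin n)) (hSx : ∀ i ∉ Sx, x i = 0) (hcard : Sx.card ≤ s)
    (K : Finset (Fin n)) (hK : K.card = min s n)
    (hKmax : ∀ i ∈ K, ∀ j ∈ Kᶜ, |z j| ≤ |z i|) :
    l2 (restr K z - x) ≤ (Real.sqrt 5 + 1) / 2 * l2 (z - x) := by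
  have hs5 : Real.sqrt 5 ^ 2 = 5 := Real.sq_sqrt (by norm_num)
  have hs5n : (0:ℝ) ≤ Real.sqrt 5 := Real.sqrt_nonneg 5
  have hφ : (0:ℝ) ≤ (Real.sqrt 5 + 1) / 2 := by positivity
  set A : Finset (Fin n) := Sx \ K with hA
  set B : Finset (Fin n) := K \ Sx with hB
  -- left-hand sum decomposition
  have hSL : ∑ i, ((restr K z - x) i)^2
      = (∑ i ∈ K, (z i - x i)^2) + ∑ i ∈ A, (x i)^2 := by
    rw [← Finset.sum_add_sum_compl K]
    congr 1
    · exact Finset.sum_congr rfl (fun i hi => by simp [restr, hi])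
    · rw [Finset.sum_subset (show A ⊆ Kᶜ by
        intro i hi
        simp only [hA, Finset.mem_sdiff] at hi
        exact Finset.mem_compl.mpr hi.2)]
      · exact Finset.sum_congr rfl (fun i hi => by
          simp [restr, Finset.mem_compl.mp hi])
      · intro i hiK hiA
        have hix : x i = 0 := by
          apply hSx
          intro hiS
          exact hiA (Finset.mem_sdiff.mpr ⟨hiS, Finset.mem_compl.mp hiK⟩)
        simp [restr, Finset.mem_compl.mp hiK, hix]
  -- right-hand sum lower bound
  have hdisj : Disjoint K A := Finset.disjoint_sdiff
  have hSR : (∑ i ∈ K, (z i - x i)^2) + (∑ i ∈ A, (z i - x i)^2)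
      ≤ ∑ i, ((z - x) i)^2 := by
    rw [← Finset.sum_union hdisj]
    exact Finset.sum_le_sum_of_subset_of_nonneg (Finset.subset_univ _)
      (fun i _ _ => sq_nonneg _)
  have hKsplit : ∑ i ∈ K, (z i - x i)^2
      = (∑ i ∈ K ∩ Sx, (z i - x i)^2) + ∑ i ∈ B, (z i - x i)^2 :=
    (Finset.sum_inter_add_sum_sdiff K Sx _).symm
  -- on B, x vanishes
  have hBz : ∑ i ∈ B, (z i)^2 = ∑ i ∈ B, (z i - x i)^2 := by
    apply Finset.sum_congr rfl
    intro i hi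
    rw [hSx i (Finset.mem_sdiff.mp hi).2]
    ring_nf
  -- cardinality comparison
  have hcardAB : A.card ≤ B.card := by
    have h1 : Sx.card ≤ K.card := by
      have h2 : Sx.card ≤ n := by
        simpa using Finset.card_le_univ Sx
      omega
    have h2 := Finset.card_sdiff_add_card_inter Sx K
    have h3 := Finset.card_sdiff_add_card_inter K Sx
    have h4 : (Sx ∩ K).card = (K ∩ Sx).card := by rw [Finset.inter_comm]
    simp only [hA, hB]
    omega
  -- injection step: small entries dominated
  have hAB : ∑ i ∈ A, (z i)^2 ≤ ∑ i ∈ B, (z i)^2 := by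
    obtain ⟨B', hB'sub, hB'card⟩ := Finset.exists_subset_card_eq hcardAB
    have eqv : A ≃ B' := Finset.equivOfCardEq hB'card.symm
    calc ∑ i ∈ A, (z i)^2 = ∑ a : A, (z a)^2 := (Finset.sum_coe_sort A _).symm
      _ ≤ ∑ a : A, (z (eqv a : Fin n))^2 := by
          apply Finset.sum_le_sum
          intro a _
          have haK : (a : Fin n) ∈ Kᶜ :=
            Finset.mem_compl.mpr (Finset.mem_sdiff.mp a.2).2
          have hbK : ((eqv a : Fin n)) ∈ K :=
            (Finset.mem_sdiff.mp (hB'sub (eqv a).2)).1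
          have habs := hKmax _ hbK _ haK
          calc (z a)^2 = |z a|^2 := (sq_abs _).symm
            _ ≤ |z (eqv a : Fin n)|^2 := by
                exact pow_le_pow_left₀ (abs_nonneg _) habs 2
            _ = (z (eqv a : Fin n))^2 := sq_abs _
      _ = ∑ b : B', (z b)^2 := Equiv.sum_comp eqv (fun b : B' => (z b)^2)
      _ = ∑ i ∈ B', (z i)^2 := Finset.sum_coe_sort B' (fun i => (z i)^2)
      _ ≤ ∑ i ∈ B, (z i)^2 :=
          Finset.sum_le_sum_of_subset_of_nonneg hB'sub (fun i _ _ => sq_nonneg _)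
  -- Minkowski on A
  have hMink := restr_mink A x z
  set u := Real.sqrt (∑ i ∈ B, (z i - x i)^2) with hu
  set v := Real.sqrt (∑ i ∈ A, (z i - x i)^2) with hv
  set bq := Real.sqrt (∑ i ∈ A, (x i)^2) with hbq
  have hzAB : Real.sqrt (∑ i ∈ A, (z i)^2) ≤ u := by
    rw [hu, ← hBz]
    exact Real.sqrt_le_sqrt hAB
  have hb : bq ≤ u + v := hMink.trans (add_le_add_left hzAB v)
  have hu2 : u^2 = ∑ i ∈ B, (z i - x i)^2 :=
    Real.sq_sqrt (Finset.sum_nonneg fun i _ => sq_nonneg _)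
  have hv2 : v^2 = ∑ i ∈ A, (z i - x i)^2 :=
    Real.sq_sqrt (Finset.sum_nonneg fun i _ => sq_nonneg _)
  have hb2 : bq^2 = ∑ i ∈ A, (x i)^2 :=
    Real.sq_sqrt (Finset.sum_nonneg fun i _ => sq_nonneg _)
  have hun : 0 ≤ u := Real.sqrt_nonneg _
  have hvn : 0 ≤ v := Real.sqrt_nonneg _
  have hbn : 0 ≤ bq := Real.sqrt_nonneg _
  have hw : 0 ≤ ∑ i ∈ K ∩ Sx, (z i - x i)^2 :=
    Finset.sum_nonneg fun i _ => sq_nonneg _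
  -- main inequality on sums of squares
  have key : ∑ i, ((restr K z - x) i)^2
      ≤ ((Real.sqrt 5 + 1) / 2)^2 * ∑ i, ((z - x) i)^2 := by
    rw [hSL, ← hb2]
    have h1 : (∑ i ∈ K, (z i - x i)^2) + bq^2
        ≤ ((Real.sqrt 5 + 1) / 2)^2 *
          ((∑ i ∈ K, (z i - x i)^2) + ∑ i ∈ A, (z i - x i)^2) := by
      rw [hKsplit, ← hu2, ← hv2]
      have hp : (0:ℝ) ≤ (Real.sqrt 5 - 1)/2 := by nlinarith
      have hq : (0:ℝ) ≤ (Real.sqrt 5 + 1)/2 := hφ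
      have hpq : (Real.sqrt 5 - 1)/2 * ((Real.sqrt 5 + 1)/2) = 1 := by
        have : (Real.sqrt 5 - 1)/2 * ((Real.sqrt 5 + 1)/2) = (Real.sqrt 5 ^ 2 - 1)/4 := by ring
        rw [this, hs5]; norm_num
      have hsq : Real.sqrt ((Real.sqrt 5 - 1)/2) * Real.sqrt ((Real.sqrt 5 + 1)/2) = 1 := by
        rw [← Real.sqrt_mul hp, hpq, Real.sqrt_one]
      have hmain : 2*u*v ≤ (Real.sqrt 5 - 1)/2 * u^2 + (Real.sqrt 5 + 1)/2 * v^2 := by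
        have h := sq_nonneg (Real.sqrt ((Real.sqrt 5 - 1)/2) * u - Real.sqrt ((Real.sqrt 5 + 1)/2) * v)
        have hexp : (Real.sqrt ((Real.sqrt 5 - 1)/2) * u - Real.sqrt ((Real.sqrt 5 + 1)/2) * v)^2
            = (Real.sqrt ((Real.sqrt 5 - 1)/2))^2 * u^2
              - 2*(Real.sqrt ((Real.sqrt 5 - 1)/2) * Real.sqrt ((Real.sqrt 5 + 1)/2))*(u*v)
              + (Real.sqrt ((Real.sqrt 5 + 1)/2))^2 * v^2 := by ring
        rw [hexp, Real.sq_sqrt hp, Real.sq_sqrt hq, hsq] at h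
        linarith
      nlinarith [hmain, mul_self_le_mul_self hbn hb, mul_nonneg hs5n hw,
        mul_nonneg hun hvn]
    refine h1.trans ?_
    have : (0:ℝ) ≤ ((Real.sqrt 5 + 1) / 2)^2 := sq_nonneg _
    exact mul_le_mul_of_nonneg_left hSR this
  -- conclude via sqrt
  unfold l2
  calc Real.sqrt (∑ i, ((restr K z - x) i)^2)
      ≤ Real.sqrt (((Real.sqrt 5 + 1) / 2)^2 * ∑ i, ((z - x) i)^2) :=
        Real.sqrt_le_sqrt key
    _ = (Real.sqrt 5 + 1) / 2 * Real.sqrt (∑ i, ((z - x) i)^2) := by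
        rw [Real.sqrt_mul (sq_nonneg _), Real.sqrt_sq hφ]
end

section
/- RIP implies contraction of the gradient step: Suppose A ∈ R^{m×n} satisfies the restricted isometry property of order s with constant δ_s < 1. Let x ∈ R^n, I ⊆ [n], and v ≥ 0 with |I ∪ supp(x)| ≤ s. Then ‖((I_n - v AᵀA)x)_I‖_2 ≤ (|1 - v| + v δ_s) ‖x‖_2. -/
open Finset Matrix

def RIP {m n : ℕ} (A : Matrix (Fin m) (Fin n) ℝ) (s : ℕ) (δ : ℝ) : Prop :=
  ∀ (x : Fin n → ℝ) (J : Finset (Fin n)), J.card ≤ s →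
    (1 - δ) * (l2 (restr J x))^2 ≤ (l2 (A.mulVec (restr J x)))^2 ∧
    (l2 (A.mulVec (restr J x)))^2 ≤ (1 + δ) * (l2 (restr J x))^2

lemma l2_nonneg {k : ℕ} (x : Fin k → ℝ) : 0 ≤ l2 x := Real.sqrt_nonneg _

lemma l2_sq {k : ℕ} (x : Fin k → ℝ) : (l2 x)^2 = ∑ i, (x i)^2 :=
  Real.sq_sqrt (Finset.sum_nonneg fun i _ => sq_nonneg _)

lemma l2_smul {k : ℕ} (c : ℝ) (hc : 0 ≤ c) (x : Fin k → ℝ) :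
    l2 (c • x) = c * l2 x := by
  unfold l2
  have h : ∑ i, ((c • x) i)^2 = c^2 * ∑ i, (x i)^2 := by
    rw [Finset.mul_sum]
    exact Finset.sum_congr rfl fun i _ => by simp [smul_eq_mul]; ring
  rw [h, Real.sqrt_mul (sq_nonneg c), Real.sqrt_sq hc]

lemma l2_eq_zero {k : ℕ} (x : Fin k → ℝ) (h : l2 x = 0) : x = 0 := by
  have hs : ∑ i, (x i)^2 = 0 := by
    have := l2_sq x; rw [h] at this; simpa using this.symm
  funext i
  have := (Finset.sum_eq_zero_iff_of_nonneg (fun i _ => sq_nonneg (x i))).1 hs i (Finset.mem_univ i)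
  exact pow_eq_zero_iff (two_ne_zero) |>.1 this

lemma sum_sq_add {k : ℕ} (u w : Fin k → ℝ) :
    ∑ i, ((u + w) i)^2 = (∑ i, (u i)^2) + 2 * (∑ i, u i * w i) + ∑ i, (w i)^2 := by
  have h : ∀ i ∈ Finset.univ, ((u + w) i)^2 = ((u i)^2 + (w i)^2) + 2 * (u i * w i) :=
    fun i _ => by simp [Pi.add_apply]; ring
  rw [Finset.sum_congr rfl h, Finset.sum_add_distrib, Finset.sum_add_distrib, Finset.mul_sum]
  ring

lemma sum_sq_sub {k : ℕ} (u w : Fin k → ℝ) :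
    ∑ i, ((u - w) i)^2 = (∑ i, (u i)^2) - 2 * (∑ i, u i * w i) + ∑ i, (w i)^2 := by
  have h : ∀ i ∈ Finset.univ, ((u - w) i)^2 = ((u i)^2 + (w i)^2) - 2 * (u i * w i) :=
    fun i _ => by simp [Pi.sub_apply]; ring
  rw [Finset.sum_congr rfl h, Finset.sum_sub_distrib, Finset.sum_add_distrib, Finset.mul_sum]
  ring

lemma cauchy {k : ℕ} (x y : Fin k → ℝ) : |∑ i, x i * y i| ≤ l2 x * l2 y := by
  have h := Finset.sum_mul_sq_le_sq_mul_sq Finset.univ x y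
  unfold l2
  rw [← Real.sqrt_mul (Finset.sum_nonneg fun i _ => sq_nonneg _), ← Real.sqrt_sq_eq_abs]
  exact Real.sqrt_le_sqrt h

lemma restr_self {k : ℕ} (J : Finset (Fin k)) (z : Fin k → ℝ)
    (h : ∀ i ∉ J, z i = 0) : restr J z = z := by
  funext i; unfold restr
  by_cases hi : i ∈ J <;> simp [hi, h i]

/-- RIP gives |‖Az‖² - ‖z‖²| ≤ δ‖z‖² for supported z. -/
lemma rip_Q {m n : ℕ} {A : Matrix (Fin m) (Fin n) ℝ} {s : ℕ} {δ : ℝ}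
    (hRIP : RIP A s δ) {J : Finset (Fin n)} (hJ : J.card ≤ s)
    (z : Fin n → ℝ) (hz : ∀ i ∉ J, z i = 0) :
    |(l2 (A.mulVec z))^2 - (l2 z)^2| ≤ δ * (l2 z)^2 := by
  have h := hRIP z J hJ
  rw [restr_self J z hz] at h
  rw [abs_le]; constructor <;> nlinarith [h.1, h.2]

/-- off-diagonal RIP bound -/
lemma rip_D {m n : ℕ} {A : Matrix (Fin m) (Fin n) ℝ} {s : ℕ} {δ : ℝ}
    (hRIP : RIP A s δ) {J : Finset (Fin n)} (hJ : J.card ≤ s)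
    (u w : Fin n → ℝ) (hu : ∀ i ∉ J, u i = 0) (hw : ∀ i ∉ J, w i = 0) :
    |(∑ i, u i * w i) - ∑ j, A.mulVec u j * A.mulVec w j| ≤ δ * l2 u * l2 w := by
  -- first the unnormalized bound
  have key : ∀ (u w : Fin n → ℝ), (∀ i ∉ J, u i = 0) → (∀ i ∉ J, w i = 0) →
      |(∑ i, u i * w i) - ∑ j, A.mulVec u j * A.mulVec w j|
        ≤ δ * ((l2 u)^2 + (l2 w)^2) / 2 := by
    intro u w hu hw
    have hp := rip_Q hRIP hJ (u + w) (fun i hi => by simp [hu i hi, hw i hi])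
    have hm := rip_Q hRIP hJ (u - w) (fun i hi => by simp [hu i hi, hw i hi])
    have ep : (l2 (u + w))^2 = (l2 u)^2 + 2 * (∑ i, u i * w i) + (l2 w)^2 := by
      simp only [l2_sq]; exact sum_sq_add u w
    have em : (l2 (u - w))^2 = (l2 u)^2 - 2 * (∑ i, u i * w i) + (l2 w)^2 := by
      simp only [l2_sq]; exact sum_sq_sub u w
    have eap : (l2 (A.mulVec (u + w)))^2
        = (l2 (A.mulVec u))^2 + 2 * (∑ j, A.mulVec u j * A.mulVec w j)
          + (l2 (A.mulVec w))^2 := by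
      rw [Matrix.mulVec_add]
      simp only [l2_sq]
      exact sum_sq_add _ _
    have eam : (l2 (A.mulVec (u - w)))^2
        = (l2 (A.mulVec u))^2 - 2 * (∑ j, A.mulVec u j * A.mulVec w j)
          + (l2 (A.mulVec w))^2 := by
      rw [Matrix.mulVec_sub]
      simp only [l2_sq]
      exact sum_sq_sub _ _
    rw [ep, eap] at hp
    rw [em, eam] at hm
    rw [abs_le] at hp hm ⊢
    constructor <;> nlinarith [hp.1, hp.2, hm.1, hm.2]
  -- normalization
  set a := l2 u with ha
  set b := l2 w with hb
  rcases eq_or_lt_of_le (l2_nonneg u) with h0 | hapos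
  · have hu0 : u = 0 := l2_eq_zero u h0.symm
    subst hu0
    rw [ha, ← h0]
    simp [Matrix.mulVec_zero]
  rcases eq_or_lt_of_le (l2_nonneg w) with h0 | hbpos
  · have hw0 : w = 0 := l2_eq_zero w h0.symm
    subst hw0
    rw [hb, ← h0]
    simp [Matrix.mulVec_zero]
  have h := key (b • u) (a • w)
    (fun i hi => by simp [hu i hi]) (fun i hi => by simp [hw i hi])
  rw [l2_smul b (le_of_lt hbpos), l2_smul a (le_of_lt hapos)] at h
  have e1 : (∑ i, (b • u) i * (a • w) i) = a * b * ∑ i, u i * w i := by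
    rw [Finset.mul_sum]; congr 1; ext i; simp [smul_eq_mul]; ring
  have e2 : (∑ j, A.mulVec (b • u) j * A.mulVec (a • w) j)
      = a * b * ∑ j, A.mulVec u j * A.mulVec w j := by
    rw [Matrix.mulVec_smul, Matrix.mulVec_smul, Finset.mul_sum]
    congr 1; ext j; simp [smul_eq_mul]; ring
  rw [e1, e2, ← mul_sub, abs_mul, abs_of_pos (mul_pos hapos hbpos)] at h
  have hq : δ * ((b * a)^2 + (a * b)^2) / 2 = a * b * (δ * a * b) := by ring
  rw [hq] at h
  have := (mul_le_mul_iff_right₀ (mul_pos hapos hbpos)).1 h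
  linarith [this]

theorem stmt8 {m n : ℕ} (A : Matrix (Fin m) (Fin n) ℝ) (s : ℕ) (δ v : ℝ)
    (hδ : δ < 1) (hRIP : RIP A s δ) (x : Fin n → ℝ) (I Sx : Finset (Fin n))
    (hSx : ∀ i ∉ Sx, x i = 0) (hv : 0 ≤ v) (hcard : (I ∪ Sx).card ≤ s) :
    l2 (restr I (x - v • (Aᵀ * A).mulVec x)) ≤ (|1 - v| + v * δ) * l2 x := by
  by_cases hx0 : x = 0
  · subst hx0
    simp [restr, l2, Matrix.mulVec_zero]
  -- δ ≥ 0
  have hxsupp : ∀ i ∉ I ∪ Sx, x i = 0 := fun i hi => hSx i (fun h => hi (Finset.mem_union_right _ h))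
  have hδ0 : 0 ≤ δ := by
    have h := hRIP x (I ∪ Sx) hcard
    rw [restr_self _ x hxsupp] at h
    have hx2 : 0 < (l2 x)^2 := by
      rcases eq_or_lt_of_le (l2_nonneg x) with h0 | hpos
      · exact absurd (l2_eq_zero x h0.symm) hx0
      · positivity
    nlinarith [h.1, h.2]
  set z : Fin n → ℝ := x - v • (Aᵀ * A).mulVec x with hz
  set y : Fin n → ℝ := restr I z with hy
  have hysupp : ∀ i ∉ I ∪ Sx, y i = 0 := by
    intro i hi
    have : i ∉ I := fun h => hi (Finset.mem_union_left _ h)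
    simp [hy, restr, this]
  -- ∑ y y = ∑ y z
  have s1 : (l2 y)^2 = ∑ i, y i * z i := by
    rw [l2_sq]
    congr 1; ext i
    by_cases hi : i ∈ I <;> simp [hy, restr, hi, sq]
  have s3 : (∑ i, y i * ((Aᵀ * A).mulVec x) i) = ∑ j, A.mulVec y j * A.mulVec x j := by
    have : (∑ i, y i * ((Aᵀ * A).mulVec x) i) = y ⬝ᵥ ((Aᵀ * A) *ᵥ x) := rfl
    rw [this, ← Matrix.mulVec_mulVec, Matrix.dotProduct_mulVec, Matrix.vecMul_transpose]
    rfl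
  have s2 : (l2 y)^2 = (1 - v) * (∑ i, y i * x i)
      + v * ((∑ i, y i * x i) - ∑ j, A.mulVec y j * A.mulVec x j) := by
    rw [s1]
    have : ∑ i, y i * z i = (∑ i, y i * x i) - v * ∑ i, y i * ((Aᵀ * A).mulVec x) i := by
      rw [Finset.mul_sum, ← Finset.sum_sub_distrib]
      congr 1; ext i; simp [hz, Pi.sub_apply, Pi.smul_apply, smul_eq_mul]; ring
    rw [this, s3]; ring
  have hcs := cauchy y x
  have hD := rip_D hRIP hcard y x hysupp hxsupp
  have bound : (l2 y)^2 ≤ (|1 - v| + v * δ) * (l2 y * l2 x) := by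
    rw [s2]
    have b1 : (1 - v) * (∑ i, y i * x i) ≤ |1 - v| * (l2 y * l2 x) := by
      calc (1 - v) * (∑ i, y i * x i) ≤ |(1 - v) * (∑ i, y i * x i)| := le_abs_self _
        _ = |1 - v| * |∑ i, y i * x i| := abs_mul _ _
        _ ≤ |1 - v| * (l2 y * l2 x) := by
            exact mul_le_mul_of_nonneg_left hcs (abs_nonneg _)
    have b2 : v * ((∑ i, y i * x i) - ∑ j, A.mulVec y j * A.mulVec x j)
        ≤ v * (δ * l2 y * l2 x) := by
      apply mul_le_mul_of_nonneg_left _ hv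
      calc _ ≤ |(∑ i, y i * x i) - ∑ j, A.mulVec y j * A.mulVec x j| := le_abs_self _
        _ ≤ δ * l2 y * l2 x := hD
    nlinarith [b1, b2]
  have hc : 0 ≤ |1 - v| + v * δ := by positivity
  rcases eq_or_lt_of_le (l2_nonneg y) with h0 | hpos
  · rw [← h0]
    exact mul_nonneg hc (l2_nonneg x)
  · nlinarith [bound, hpos]
end
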